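/- arXiv:2005.00075 — 2 statements merged into one kernel-verified Lean document; each statement's English description precedes it below -/
import Mathlib

section
/- Let s > 0 and let B_s be the backward shift on the weighted space H_s. Then ‖B_s^m‖² ≍ (m+1)^{max(1-s,0)} and ‖F_s^m‖² ≍ (m+1)^{max(s-1,0)}, where F_s is the forward shift f(t) ↦ t·f(t) on H_s. -/
open scoped InnerProductSpace

/-- Cesàro numbers: `ces s j` is the `j`-th Taylor coefficient of `(1-t)^{-s}`,
the weight sequence of the space `H_s`. -/
noncomputable def ces (c : ℝ) (j : ℕ) : ℝ :=
  (ascPochhammer ℝ j).eval c / (Nat.factorial j)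

open Filter Finset Topology

lemma ces_pos {s : ℝ} (hs : 0 < s) (n : ℕ) : 0 < ces s n :=
  div_pos (ascPochhammer_pos n s hs) (by exact_mod_cast (Nat.factorial_pos n))

lemma poch_eval (s : ℝ) (n : ℕ) :
    (ascPochhammer ℝ n).eval s = ∏ j ∈ Finset.range n, (s + j) := by
  induction n with
  | zero => simp
  | succ n ih => rw [ascPochhammer_succ_eval, ih, Finset.prod_range_succ]

lemma ces_zero (s : ℝ) : ces s 0 = 1 := by simp [ces]

lemma gammaSeq_mul_ces {s : ℝ} (hs : 0 < s) (n : ℕ) :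
    Real.GammaSeq s n * ces s n = (n : ℝ) ^ s / (s + n) := by
  have hP : (0:ℝ) < ∏ j ∈ Finset.range n, (s + j) := by
    apply Finset.prod_pos; intro j _; positivity
  have hF : (0:ℝ) < (Nat.factorial n : ℝ) := by exact_mod_cast Nat.factorial_pos n
  have hsn : (0:ℝ) < s + n := by positivity
  rw [Real.GammaSeq, ces, poch_eval, Finset.prod_range_succ]
  field_simp

lemma gammaSeq_pos {s : ℝ} (hs : 0 < s) {n : ℕ} (hn : 0 < n) : 0 < Real.GammaSeq s n := by
  have hP : (0:ℝ) < ∏ j ∈ Finset.range (n+1), (s + j) := by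
    apply Finset.prod_pos; intro j _; positivity
  have hF : (0:ℝ) < (Nat.factorial n : ℝ) := by exact_mod_cast Nat.factorial_pos n
  have hn' : (0:ℝ) < (n:ℝ) := by exact_mod_cast hn
  have : (0:ℝ) < (n:ℝ) ^ s := Real.rpow_pos_of_pos hn' s
  exact div_pos (by positivity) hP

lemma ces_tendsto {s : ℝ} (hs : 0 < s) :
    Tendsto (fun n : ℕ => ces s n * ((n : ℝ) + 1) ^ (1 - s)) atTop (𝓝 (Real.Gamma s)⁻¹) := by
  have hΓ : 0 < Real.Gamma s := Real.Gamma_pos_of_pos hs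
  have h3 : Tendsto (fun n : ℕ => (((n:ℝ) + 1) / (n:ℝ))) atTop (𝓝 1) := by
    have := (tendsto_natCast_div_add_atTop (1:ℝ)).inv₀ one_ne_zero
    simp only [inv_div] at this
    simpa using this
  have h3' : Tendsto (fun n : ℕ => (((n:ℝ) + 1) / (n:ℝ)) ^ (1 - s)) atTop (𝓝 1) := by
    have hc : ContinuousAt (fun x : ℝ => x ^ (1 - s)) 1 :=
      Real.continuousAt_rpow_const 1 (1 - s) (Or.inl one_ne_zero)
    have := hc.tendsto.comp h3
    simpa [Real.one_rpow, Function.comp_def] using this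
  have hlim : Tendsto (fun n : ℕ =>
      (Real.GammaSeq s n)⁻¹ * ((n:ℝ) / ((n:ℝ) + s)) * (((n:ℝ) + 1) / (n:ℝ)) ^ (1 - s))
      atTop (𝓝 ((Real.Gamma s)⁻¹ * 1 * 1)) :=
    (((Real.GammaSeq_tendsto_Gamma s).inv₀ hΓ.ne').mul
      (tendsto_natCast_div_add_atTop (s:ℝ))).mul h3'
  rw [show ((Real.Gamma s)⁻¹ * 1 * 1) = (Real.Gamma s)⁻¹ by ring] at hlim
  apply hlim.congr'
  filter_upwards [eventually_ge_atTop 1] with n hn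
  have hn' : (0:ℝ) < (n:ℝ) := by exact_mod_cast hn
  have hG : 0 < Real.GammaSeq s n := gammaSeq_pos hs hn
  have hId := gammaSeq_mul_ces hs n
  have hces : ces s n = (n:ℝ) ^ s / ((s + n) * Real.GammaSeq s n) := by
    rw [eq_div_iff (by positivity)]
    field_simp at hId
    linear_combination hId
  have hns : (n:ℝ) ^ (1 - s) * (n:ℝ) ^ s = (n:ℝ) := by
    rw [← Real.rpow_add hn']; norm_num
  have h1 : (0:ℝ) < (n:ℝ) ^ (1-s) := Real.rpow_pos_of_pos hn' _
  have h2 : (0:ℝ) < s + n := by positivity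
  have hns2 : (n:ℝ) ^ s = (n:ℝ) / (n:ℝ) ^ (1-s) := by
    rw [eq_div_iff h1.ne']; linear_combination hns
  rw [hces, Real.div_rpow (by positivity) (by positivity), hns2]
  field_simp
  ring

lemma exists_bounds {q : ℕ → ℝ} {L : ℝ} (hL : 0 < L) (hq : ∀ n, 0 < q n)
    (h : Tendsto q atTop (𝓝 L)) :
    ∃ a b : ℝ, 0 < a ∧ 0 < b ∧ ∀ n, a ≤ q n ∧ q n ≤ b := by
  have hev : ∀ᶠ n in atTop, q n ∈ Set.Icc (L/2) (2*L) :=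
    h.eventually (Icc_mem_nhds_iff.mpr ⟨by linarith, by linarith⟩)
  obtain ⟨N, hN⟩ := eventually_atTop.mp hev
  have hne : (Finset.range (N+1)).Nonempty := ⟨N, Finset.self_mem_range_succ N⟩
  refine ⟨min (L/2) ((Finset.range (N+1)).inf' hne q),
    max (2*L) ((Finset.range (N+1)).sup' hne q), ?_, ?_, ?_⟩
  · apply lt_min (by linarith)
    rw [Finset.lt_inf'_iff]
    exact fun i _ => hq i
  · exact lt_max_of_lt_left (by linarith)
  · intro n
    rcases le_or_gt n N with hn | hn
    · have hmem : n ∈ Finset.range (N+1) := Finset.mem_range_succ_iff.mpr hn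
      exact ⟨le_trans (min_le_right _ _) (Finset.inf'_le q hmem),
        le_trans (Finset.le_sup' q hmem) (le_max_right _ _)⟩
    · have := hN n hn.le
      exact ⟨le_trans (min_le_left _ _) this.1, le_trans this.2 (le_max_left _ _)⟩

section Hilbert

variable {E : Type*} [NormedAddCommGroup E] [InnerProductSpace ℂ E]

lemma norm_sq_sum (v : ℕ → E) (w : ℕ → ℝ)
    (hv : ∀ i j, ⟪v i, v j⟫_ℂ = if i = j then (w i : ℂ) else 0)
    (S : Finset ℕ) (c : ℕ → ℂ) :
    ‖∑ i ∈ S, c i • v i‖ ^ 2 = ∑ i ∈ S, ‖c i‖ ^ 2 * w i := by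
  have key : (⟪∑ i ∈ S, c i • v i, ∑ i ∈ S, c i • v i⟫_ℂ)
      = ((∑ i ∈ S, ‖c i‖ ^ 2 * w i : ℝ) : ℂ) := by
    rw [sum_inner]
    push_cast
    refine Finset.sum_congr rfl fun i hi => ?_
    rw [inner_smul_left, inner_sum]
    have : ∀ j ∈ S, (starRingEnd ℂ) (c i) * ⟪v i, c j • v j⟫_ℂ
        = if j = i then ((‖c i‖:ℂ) ^ 2 * (w i : ℂ)) else 0 := by
      intro j hj
      rw [inner_smul_right, hv]
      rcases eq_or_ne j i with h | h
      · subst h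
        rw [if_pos rfl, if_pos rfl]
        have h0 : (starRingEnd ℂ) (c j) * c j = (‖c j‖ : ℂ) ^ 2 := RCLike.conj_mul (c j)
        linear_combination (w j : ℂ) * h0
      · rw [if_neg (Ne.symm h), if_neg h, mul_zero, mul_zero]
    rw [Finset.mul_sum, Finset.sum_congr rfl this, Finset.sum_ite_eq' S i]
    rw [if_pos hi]
  calc ‖∑ i ∈ S, c i • v i‖ ^ 2
      = RCLike.re (⟪∑ i ∈ S, c i • v i, ∑ i ∈ S, c i • v i⟫_ℂ) :=
        (inner_self_eq_norm_sq _).symm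
    _ = ∑ i ∈ S, ‖c i‖ ^ 2 * w i := by rw [key]; exact Complex.ofReal_re _

lemma norm_e_sq (e : ℕ → E) (k : ℕ → ℝ)
    (horth : ∀ i j : ℕ, ⟪e i, e j⟫_ℂ = if i = j then ((k i : ℝ) : ℂ) else 0) (i : ℕ) :
    ‖e i‖ ^ 2 = k i := by
  have := inner_self_eq_norm_sq (𝕜 := ℂ) (e i)
  rw [horth i i, if_pos rfl] at this
  simpa using this.symm

lemma opnorm_sq_le (e : ℕ → E) (k : ℕ → ℝ)
    (horth : ∀ i j : ℕ, ⟪e i, e j⟫_ℂ = if i = j then ((k i : ℝ) : ℂ) else 0)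
    (hdense : (Submodule.span ℂ (Set.range e)).topologicalClosure = ⊤)
    (T : E →L[ℂ] E) (w : ℕ → ℝ)
    (hT : ∀ i j, ⟪T (e i), T (e j)⟫_ℂ = if i = j then (w i : ℂ) else 0)
    (M : ℝ) (hM : 0 ≤ M) (hw : ∀ i, w i ≤ M * k i) : ‖T‖ ^ 2 ≤ M := by
  have hb : ∀ x : E, ‖T x‖ ≤ Real.sqrt M * ‖x‖ := by
    have hcl : IsClosed {x : E | ‖T x‖ ≤ Real.sqrt M * ‖x‖} :=
      isClosed_le (T.continuous.norm) (continuous_const.mul continuous_norm)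
    have hsub : (Submodule.span ℂ (Set.range e) : Set E) ⊆
        {x : E | ‖T x‖ ≤ Real.sqrt M * ‖x‖} := by
      intro x hx
      rw [SetLike.mem_coe, Finsupp.mem_span_range_iff_exists_finsupp] at hx
      obtain ⟨c, rfl⟩ := hx
      rw [Finsupp.sum]
      set S := c.support with hS
      have h1 : ‖∑ i ∈ S, c i • e i‖ ^ 2 = ∑ i ∈ S, ‖c i‖ ^ 2 * k i :=
        norm_sq_sum e k horth S c
      have h2 : ‖T (∑ i ∈ S, c i • e i)‖ ^ 2 = ∑ i ∈ S, ‖c i‖ ^ 2 * w i := by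
        rw [map_sum]
        simp_rw [map_smul]
        exact norm_sq_sum (fun i => T (e i)) w hT S c
      have h3 : ∑ i ∈ S, ‖c i‖ ^ 2 * w i ≤ M * ∑ i ∈ S, ‖c i‖ ^ 2 * k i := by
        rw [Finset.mul_sum]
        apply Finset.sum_le_sum
        intro i _
        calc ‖c i‖ ^ 2 * w i ≤ ‖c i‖ ^ 2 * (M * k i) :=
              mul_le_mul_of_nonneg_left (hw i) (sq_nonneg _)
          _ = M * (‖c i‖ ^ 2 * k i) := by ring
      have h4 : ‖T (∑ i ∈ S, c i • e i)‖ ^ 2 ≤ M * ‖∑ i ∈ S, c i • e i‖ ^ 2 := by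
        rw [h1, h2]; exact h3
      have h5 := Real.sqrt_le_sqrt h4
      rw [Real.sqrt_sq (norm_nonneg _), Real.sqrt_mul hM, Real.sqrt_sq (norm_nonneg _)] at h5
      exact h5
    intro x
    have hx : x ∈ closure (Submodule.span ℂ (Set.range e) : Set E) := by
      rw [← Submodule.topologicalClosure_coe, hdense]
      trivial
    exact closure_minimal hsub hcl hx
  have hTn : ‖T‖ ≤ Real.sqrt M := T.opNorm_le_bound (Real.sqrt_nonneg M) hb
  calc ‖T‖ ^ 2 ≤ Real.sqrt M ^ 2 := by
        apply pow_le_pow_left₀ (norm_nonneg T) hTn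
    _ = M := Real.sq_sqrt hM

lemma opnorm_sq_lower (e : ℕ → E) (k : ℕ → ℝ)
    (horth : ∀ i j : ℕ, ⟪e i, e j⟫_ℂ = if i = j then ((k i : ℝ) : ℂ) else 0)
    (T : E →L[ℂ] E) (j t : ℕ) (hTj : T (e j) = e t) (hkj : 0 < k j) :
    k t / k j ≤ ‖T‖ ^ 2 := by
  have h := T.le_opNorm (e j)
  rw [hTj] at h
  have h1 : ‖e t‖ ^ 2 ≤ ‖T‖ ^ 2 * ‖e j‖ ^ 2 := by
    nlinarith [norm_nonneg (e t), norm_nonneg (e j), norm_nonneg T]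
  rw [norm_e_sq e k horth, norm_e_sq e k horth] at h1
  rw [div_le_iff₀ hkj]
  exact h1

end Hilbert

lemma rpow_claim1 {s x y K : ℝ} (hx : 1 ≤ x) (hxy : x ≤ y) (hyK : y ≤ K * x) (hK : 1 ≤ K) :
    x ^ (s - 1) ≤ K ^ (max (1 - s) 0) * y ^ (s - 1) := by
  have hx0 : (0:ℝ) < x := by linarith
  have hy0 : (0:ℝ) < y := by linarith
  have hK0 : (0:ℝ) < K := by linarith
  rcases le_total s 1 with hs1 | hs1
  · rw [max_eq_left (by linarith : (0:ℝ) ≤ 1 - s),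
      show s - 1 = -(1 - s) by ring, Real.rpow_neg hx0.le, Real.rpow_neg hy0.le]
    have h2 : y ^ (1 - s) ≤ K ^ (1 - s) * x ^ (1 - s) := by
      rw [← Real.mul_rpow hK0.le hx0.le]
      exact Real.rpow_le_rpow hy0.le hyK (by linarith)
    have px : 0 < x ^ (1 - s) := Real.rpow_pos_of_pos hx0 _
    have py : 0 < y ^ (1 - s) := Real.rpow_pos_of_pos hy0 _
    rw [show K ^ (1-s) * (y ^ (1-s))⁻¹ = K ^ (1-s) / y ^ (1-s) by ring,
      inv_eq_one_div, div_le_div_iff₀ px py]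
    linarith
  · rw [max_eq_right (by linarith : (0:ℝ) ≥ 1 - s), Real.rpow_zero, one_mul]
    exact Real.rpow_le_rpow hx0.le hxy (by linarith)

lemma rpow_claim2 {s x y K : ℝ} (hx : 1 ≤ x) (hxy : x ≤ y) (hyK : y ≤ K * x) (hK : 1 ≤ K) :
    y ^ (s - 1) ≤ K ^ (max (s - 1) 0) * x ^ (s - 1) := by
  have hx0 : (0:ℝ) < x := by linarith
  have hy0 : (0:ℝ) < y := by linarith
  have hK0 : (0:ℝ) < K := by linarith
  rcases le_total s 1 with hs1 | hs1
  · rw [max_eq_right (by linarith : s - 1 ≤ (0:ℝ)), Real.rpow_zero, one_mul]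
    exact Real.rpow_le_rpow_of_nonpos hx0 hxy (by linarith)
  · rw [max_eq_left (by linarith : (0:ℝ) ≤ s - 1), ← Real.mul_rpow hK0.le hx0.le]
    exact Real.rpow_le_rpow hy0.le hyK (by linarith)

/-- Norm asymptotics of the powers of the backward shift `B_s` and forward shift `F_s`
on the weighted space `H_s` (modeled abstractly: `e n` is the monomial `t^n`, an
orthogonal family with `‖e n‖² = k_n` whose span is dense):
`‖B_s^m‖² ≍ (m+1)^{max(1-s,0)}` and `‖F_s^m‖² ≍ (m+1)^{max(s-1,0)}`. -/
theorem stmt_18 {E : Type*} [NormedAddCommGroup E] [InnerProductSpace ℂ E] [CompleteSpace E]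
    (s : ℝ) (hs : 0 < s) (e : ℕ → E)
    (horth : ∀ i j : ℕ, ⟪e i, e j⟫_ℂ = if i = j then ((ces s i : ℝ) : ℂ) else 0)
    (hdense : (Submodule.span ℂ (Set.range e)).topologicalClosure = ⊤)
    (B F : E →L[ℂ] E)
    (hB0 : B (e 0) = 0) (hB : ∀ n : ℕ, B (e (n + 1)) = e n)
    (hF : ∀ n : ℕ, F (e n) = e (n + 1)) :
    ∃ c C : ℝ, 0 < c ∧ 0 < C ∧ ∀ m : ℕ,
      c * ((m : ℝ) + 1) ^ (max (1 - s) 0) ≤ ‖B ^ m‖ ^ 2 ∧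
      ‖B ^ m‖ ^ 2 ≤ C * ((m : ℝ) + 1) ^ (max (1 - s) 0) ∧
      c * ((m : ℝ) + 1) ^ (max (s - 1) 0) ≤ ‖F ^ m‖ ^ 2 ∧
      ‖F ^ m‖ ^ 2 ≤ C * ((m : ℝ) + 1) ^ (max (s - 1) 0) := by
  obtain ⟨a, b, ha0, hb0, hab⟩ := exists_bounds (inv_pos.mpr (Real.Gamma_pos_of_pos hs))
    (fun n => mul_pos (ces_pos hs n) (Real.rpow_pos_of_pos (by positivity) _)) (ces_tendsto hs)
  have hprod : ∀ n : ℕ, ((n:ℝ)+1) ^ (1-s) * ((n:ℝ)+1) ^ (s-1) = 1 := fun n => by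
    rw [← Real.rpow_add (by positivity)]; norm_num
  have hlow : ∀ n : ℕ, a * ((n:ℝ)+1) ^ (s-1) ≤ ces s n := by
    intro n
    have h := (hab n).1
    have hp : (0:ℝ) < ((n:ℝ)+1) ^ (s-1) := Real.rpow_pos_of_pos (by positivity) _
    calc a * ((n:ℝ)+1)^(s-1) ≤ (ces s n * ((n:ℝ)+1)^(1-s)) * ((n:ℝ)+1)^(s-1) :=
          mul_le_mul_of_nonneg_right h hp.le
      _ = ces s n * (((n:ℝ)+1)^(1-s) * ((n:ℝ)+1)^(s-1)) := by ring
      _ = ces s n := by rw [hprod n, mul_one]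
  have hup : ∀ n : ℕ, ces s n ≤ b * ((n:ℝ)+1) ^ (s-1) := by
    intro n
    have h := (hab n).2
    have hp : (0:ℝ) < ((n:ℝ)+1) ^ (s-1) := Real.rpow_pos_of_pos (by positivity) _
    calc ces s n = ces s n * (((n:ℝ)+1)^(1-s) * ((n:ℝ)+1)^(s-1)) := by rw [hprod n, mul_one]
      _ = (ces s n * ((n:ℝ)+1)^(1-s)) * ((n:ℝ)+1)^(s-1) := by ring
      _ ≤ b * ((n:ℝ)+1)^(s-1) := mul_le_mul_of_nonneg_right h hp.le
  have hBpow : ∀ m i, (B ^ m) (e i) = if i < m then 0 else e (i - m) := by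
    intro m
    induction m with
    | zero => intro i; simp
    | succ m ih =>
      intro i
      rw [pow_succ, ContinuousLinearMap.mul_apply]
      cases i with
      | zero => rw [hB0, map_zero, if_pos (Nat.succ_pos m)]
      | succ n =>
        rw [hB n, ih n]
        simp [Nat.succ_lt_succ_iff, Nat.succ_sub_succ]
  have hFpow : ∀ m i, (F ^ m) (e i) = e (i + m) := by
    intro m
    induction m with
    | zero => intro i; simp
    | succ m ih =>
      intro i
      rw [pow_succ, ContinuousLinearMap.mul_apply, hF, ih]
      congr 1
      omega
  have hBorth : ∀ m i j, ⟪(B ^ m) (e i), (B ^ m) (e j)⟫_ℂ =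
      if i = j then (((if i < m then (0:ℝ) else ces s (i - m)) : ℝ) : ℂ) else 0 := by
    intro m i j
    rw [hBpow, hBpow]
    rcases lt_or_ge i m with hi | hi
    · simp only [if_pos hi, inner_zero_left]
      split_ifs <;> simp
    · rcases lt_or_ge j m with hj | hj
      · simp only [if_neg (not_lt.mpr hi), if_pos hj, inner_zero_right]
        have hne : i ≠ j := by omega
        simp [hne]
      · simp only [if_neg (not_lt.mpr hi), if_neg (not_lt.mpr hj)]
        rw [horth]
        by_cases h : i = j
        · subst h; simp
        · have hne2 : i - m ≠ j - m := by omega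
          simp [h, hne2]
  have hForth : ∀ m i j, ⟪(F ^ m) (e i), (F ^ m) (e j)⟫_ℂ =
      if i = j then ((ces s (i + m) : ℝ) : ℂ) else 0 := by
    intro m i j
    rw [hFpow, hFpow, horth]
    by_cases h : i = j
    · subst h; simp
    · have hne2 : i + m ≠ j + m := by omega
      simp [h, hne2]
  have hC0 : (0:ℝ) < b / a := div_pos hb0 ha0
  have hupB : ∀ m : ℕ, ‖B ^ m‖ ^ 2 ≤ (b/a) * ((m:ℝ)+1) ^ (max (1-s) 0) := by
    intro m
    have hMpos : (0:ℝ) ≤ (b/a) * ((m:ℝ)+1) ^ (max (1-s) 0) :=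
      (mul_pos hC0 (Real.rpow_pos_of_pos (by positivity) _)).le
    refine opnorm_sq_le e (ces s) horth hdense (B ^ m) _ (hBorth m) _ hMpos ?_
    intro i
    split_ifs with hi
    · exact mul_nonneg hMpos (ces_pos hs i).le
    · push_neg at hi
      have hcast : ((i - m : ℕ) : ℝ) = (i:ℝ) - (m:ℝ) := Nat.cast_sub hi
      have hm0 : (0:ℝ) ≤ (m:ℝ) := Nat.cast_nonneg m
      have him : (m:ℝ) ≤ (i:ℝ) := by exact_mod_cast hi
      have hx1 : (1:ℝ) ≤ ((i-m:ℕ):ℝ) + 1 := by rw [hcast]; linarith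
      have hxy : ((i-m:ℕ):ℝ) + 1 ≤ (i:ℝ) + 1 := by rw [hcast]; linarith
      have hyK : (i:ℝ) + 1 ≤ ((m:ℝ)+1) * (((i-m:ℕ):ℝ) + 1) := by
        rw [hcast]; nlinarith
      have hclaim := rpow_claim1 (s := s) hx1 hxy hyK (by linarith)
      calc ces s (i - m) ≤ b * (((i-m:ℕ):ℝ)+1)^(s-1) := hup _
        _ ≤ b * (((m:ℝ)+1)^(max (1-s) 0) * (((i:ℝ)+1)^(s-1))) :=
            mul_le_mul_of_nonneg_left hclaim hb0.le
        _ = (b/a) * ((m:ℝ)+1)^(max (1-s) 0) * (a * ((i:ℝ)+1)^(s-1)) := by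
            field_simp
        _ ≤ (b/a) * ((m:ℝ)+1)^(max (1-s) 0) * ces s i :=
            mul_le_mul_of_nonneg_left (hlow i) hMpos
  have hupF : ∀ m : ℕ, ‖F ^ m‖ ^ 2 ≤ (b/a) * ((m:ℝ)+1) ^ (max (s-1) 0) := by
    intro m
    have hMpos : (0:ℝ) ≤ (b/a) * ((m:ℝ)+1) ^ (max (s-1) 0) :=
      (mul_pos hC0 (Real.rpow_pos_of_pos (by positivity) _)).le
    refine opnorm_sq_le e (ces s) horth hdense (F ^ m) _ (hForth m) _ hMpos ?_
    intro i
    have hm0 : (0:ℝ) ≤ (m:ℝ) := Nat.cast_nonneg m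
    have hi0 : (0:ℝ) ≤ (i:ℝ) := Nat.cast_nonneg i
    have hx1 : (1:ℝ) ≤ (i:ℝ) + 1 := by linarith
    have hxy : (i:ℝ) + 1 ≤ ((i+m:ℕ):ℝ) + 1 := by push_cast; linarith
    have hyK : ((i+m:ℕ):ℝ) + 1 ≤ ((m:ℝ)+1) * ((i:ℝ) + 1) := by push_cast; nlinarith
    have hclaim := rpow_claim2 (s := s) hx1 hxy hyK (by linarith)
    calc ces s (i + m) ≤ b * (((i+m:ℕ):ℝ)+1)^(s-1) := hup _
      _ ≤ b * (((m:ℝ)+1)^(max (s-1) 0) * (((i:ℝ)+1)^(s-1))) :=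
          mul_le_mul_of_nonneg_left hclaim hb0.le
      _ = (b/a) * ((m:ℝ)+1)^(max (s-1) 0) * (a * ((i:ℝ)+1)^(s-1)) := by
          field_simp
      _ ≤ (b/a) * ((m:ℝ)+1)^(max (s-1) 0) * ces s i :=
          mul_le_mul_of_nonneg_left (hlow i) hMpos
  have hBwit1 : ∀ m : ℕ, (B ^ m) (e m) = e 0 := fun m => by
    rw [hBpow]; rw [if_neg (lt_irrefl m)]; congr 1; omega
  have hBwit2 : ∀ m : ℕ, (B ^ m) (e (m + m)) = e m := fun m => by
    rw [hBpow]; rw [if_neg (by omega)]; congr 1; omega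
  have hFwit : ∀ m : ℕ, (F ^ m) (e m) = e (m + m) := fun m => hFpow m m
  have hFwit0 : ∀ m : ℕ, (F ^ m) (e 0) = e m := fun m => by
    rw [hFpow]; congr 1; omega
  rcases le_total s 1 with hs1 | hs1
  · -- case s ≤ 1
    refine ⟨min (1/b) ((a/b) * 2 ^ (s-1)), b/a,
      lt_min (div_pos one_pos hb0)
        (mul_pos (div_pos ha0 hb0) (Real.rpow_pos_of_pos two_pos _)), hC0, ?_⟩
    intro m
    have hmax1 : max (1-s) 0 = 1-s := max_eq_left (by linarith)
    have hmax2 : max (s-1) 0 = 0 := max_eq_right (by linarith)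
    have hm1 : (0:ℝ) < (m:ℝ)+1 := by positivity
    have hm0 : (0:ℝ) ≤ (m:ℝ) := Nat.cast_nonneg m
    refine ⟨?_, hupB m, ?_, hupF m⟩
    · rw [hmax1]
      have hlw := opnorm_sq_lower e (ces s) horth (B^m) m 0 (hBwit1 m) (ces_pos hs m)
      rw [ces_zero] at hlw
      have key : (1/b) * ((m:ℝ)+1)^(1-s) ≤ 1 / ces s m := by
        rw [show (1/b) * ((m:ℝ)+1)^(1-s) = ((m:ℝ)+1)^(1-s)/b by ring,
          div_le_div_iff₀ hb0 (ces_pos hs m)]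
        calc ((m:ℝ)+1)^(1-s) * ces s m
            ≤ ((m:ℝ)+1)^(1-s) * (b*((m:ℝ)+1)^(s-1)) :=
              mul_le_mul_of_nonneg_left (hup m) (Real.rpow_pos_of_pos hm1 _).le
          _ = b * (((m:ℝ)+1)^(1-s) * ((m:ℝ)+1)^(s-1)) := by ring
          _ = 1 * b := by rw [hprod m]; ring
      calc min (1/b) ((a/b)*2^(s-1)) * ((m:ℝ)+1)^(1-s)
          ≤ (1/b) * ((m:ℝ)+1)^(1-s) :=
            mul_le_mul_of_nonneg_right (min_le_left _ _)
              (Real.rpow_pos_of_pos hm1 _).le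
        _ ≤ 1 / ces s m := key
        _ ≤ ‖B^m‖^2 := hlw
    · rw [hmax2, Real.rpow_zero, mul_one]
      have hlw := opnorm_sq_lower e (ces s) horth (F^m) m (m+m) (hFwit m) (ces_pos hs m)
      have h2m : ((m+m:ℕ):ℝ) + 1 = 2*(m:ℝ)+1 := by push_cast; ring
      have hr : (2:ℝ)^(s-1) * ((m:ℝ)+1)^(s-1) ≤ (((m+m:ℕ):ℝ)+1)^(s-1) := by
        rw [h2m, ← Real.mul_rpow two_pos.le hm1.le]
        exact Real.rpow_le_rpow_of_nonpos (by linarith) (by linarith) (by linarith)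
      have key : (a/b) * 2^(s-1) ≤ ces s (m+m) / ces s m := by
        rw [show (a/b)*(2:ℝ)^(s-1) = (a*2^(s-1))/b by ring,
          div_le_div_iff₀ hb0 (ces_pos hs m)]
        calc a*2^(s-1)*ces s m
            ≤ a*2^(s-1)*(b*((m:ℝ)+1)^(s-1)) :=
              mul_le_mul_of_nonneg_left (hup m)
                (mul_nonneg ha0.le (Real.rpow_pos_of_pos two_pos _).le)
          _ = b * (a * ((2:ℝ)^(s-1)*((m:ℝ)+1)^(s-1))) := by ring
          _ ≤ b * (a * (((m+m:ℕ):ℝ)+1)^(s-1)) :=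
              mul_le_mul_of_nonneg_left (mul_le_mul_of_nonneg_left hr ha0.le) hb0.le
          _ ≤ b * ces s (m+m) :=
              mul_le_mul_of_nonneg_left (hlow (m+m)) hb0.le
          _ = ces s (m+m) * b := mul_comm _ _
      exact le_trans (le_trans (min_le_right _ _) key) hlw
  · -- case 1 ≤ s
    refine ⟨min a ((a/b) * 2 ^ (1-s)), b/a,
      lt_min ha0 (mul_pos (div_pos ha0 hb0) (Real.rpow_pos_of_pos two_pos _)), hC0, ?_⟩
    intro m
    have hmax1 : max (1-s) 0 = 0 := max_eq_right (by linarith)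
    have hmax2 : max (s-1) 0 = s-1 := max_eq_left (by linarith)
    have hm1 : (0:ℝ) < (m:ℝ)+1 := by positivity
    have hm0 : (0:ℝ) ≤ (m:ℝ) := Nat.cast_nonneg m
    refine ⟨?_, hupB m, ?_, hupF m⟩
    · rw [hmax1, Real.rpow_zero, mul_one]
      have hlw := opnorm_sq_lower e (ces s) horth (B^m) (m+m) m (hBwit2 m) (ces_pos hs (m+m))
      have h2m : ((m+m:ℕ):ℝ) + 1 = 2*(m:ℝ)+1 := by push_cast; ring
      have hr : (((m+m:ℕ):ℝ)+1)^(s-1) ≤ (2:ℝ)^(s-1) * ((m:ℝ)+1)^(s-1) := by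
        rw [h2m, ← Real.mul_rpow two_pos.le hm1.le]
        exact Real.rpow_le_rpow (by linarith) (by linarith) (by linarith)
      have hpow1 : (2:ℝ)^(1-s) * (2:ℝ)^(s-1) = 1 := by
        rw [← Real.rpow_add two_pos]; norm_num
      have key : (a/b) * 2^(1-s) ≤ ces s m / ces s (m+m) := by
        rw [show (a/b)*(2:ℝ)^(1-s) = (a*2^(1-s))/b by ring,
          div_le_div_iff₀ hb0 (ces_pos hs (m+m))]
        calc a*2^(1-s)*ces s (m+m)
            ≤ a*2^(1-s)*(b*(((m+m:ℕ):ℝ)+1)^(s-1)) :=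
              mul_le_mul_of_nonneg_left (hup (m+m))
                (mul_nonneg ha0.le (Real.rpow_pos_of_pos two_pos _).le)
          _ ≤ a*2^(1-s)*(b*((2:ℝ)^(s-1) * ((m:ℝ)+1)^(s-1))) :=
              mul_le_mul_of_nonneg_left (mul_le_mul_of_nonneg_left hr hb0.le)
                (mul_nonneg ha0.le (Real.rpow_pos_of_pos two_pos _).le)
          _ = b * (a * ((m:ℝ)+1)^(s-1)) * ((2:ℝ)^(1-s) * (2:ℝ)^(s-1)) := by ring
          _ = b * (a * ((m:ℝ)+1)^(s-1)) := by rw [hpow1, mul_one]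
          _ ≤ b * ces s m := mul_le_mul_of_nonneg_left (hlow m) hb0.le
          _ = ces s m * b := mul_comm _ _
      exact le_trans (le_trans (min_le_right _ _) key) hlw
    · rw [hmax2]
      have hlw := opnorm_sq_lower e (ces s) horth (F^m) 0 m (hFwit0 m) (ces_pos hs 0)
      rw [ces_zero, div_one] at hlw
      calc min a ((a/b)*2^(1-s)) * ((m:ℝ)+1)^(s-1)
          ≤ a * ((m:ℝ)+1)^(s-1) :=
            mul_le_mul_of_nonneg_right (min_le_left _ _)
              (Real.rpow_pos_of_pos hm1 _).le
        _ ≤ ces s m := hlow m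
        _ ≤ ‖F^m‖^2 := hlw
end

section
/- Let 0 < a < 1 and set f_r(t) = (1-t)^{a+1}/(1-rt)^a for 0 < r < 1. Then there is a constant C independent of r and n such that the n-th Taylor coefficient of f_r satisfies |f̂_r(n)| ≤ C/(n+1)^{1+a} for all n ≥ 0. -/
open Complex

lemma hasDerivAt_lin_cpow (s w t : ℂ) (h : (1 - s*t) ∈ Complex.slitPlane) :
    HasDerivAt (fun z : ℂ => (1 - s*z) ^ w) (w * (1 - s*t) ^ (w-1) * (-s)) t := by
  have h1 : HasDerivAt (fun z : ℂ => 1 - s*z) (-s) t := by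
    simpa using ((hasDerivAt_id t).const_mul s).const_sub 1
  exact h1.cpow_const h

lemma re_pos_aux {s : ℝ} (hs0 : 0 ≤ s) (hs1 : s ≤ 1) {t : ℂ} (ht : ‖t‖ < 1) :
    0 < (1 - (s:ℂ)*t).re := by
  have h1 : |t.re| ≤ ‖t‖ := Complex.abs_re_le_norm t
  have : (1 - (s:ℂ)*t).re = 1 - s * t.re := by simp
  rw [this]
  rw [abs_le] at h1
  nlinarith [norm_nonneg t]

lemma slit_aux {s : ℝ} (hs0 : 0 ≤ s) (hs1 : s ≤ 1) {t : ℂ} (ht : ‖t‖ < 1) :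
    (1 - (s:ℂ)*t) ∈ Complex.slitPlane :=
  Complex.mem_slitPlane_iff.2 (Or.inl (re_pos_aux hs0 hs1 ht))

noncomputable def fF (a r : ℝ) : ℂ → ℂ := fun t =>
  (1 - t)^((a:ℂ)+1) * (1 - (r:ℂ)*t)^(-(a:ℂ))
noncomputable def fD1 (a r : ℝ) : ℂ → ℂ := fun t =>
  (-((a:ℂ)+1)) * ((1 - t)^(a:ℂ) * (1 - (r:ℂ)*t)^(-(a:ℂ)))
  + (a:ℂ)*(r:ℂ) * ((1 - t)^((a:ℂ)+1) * (1 - (r:ℂ)*t)^(-(a:ℂ)-1))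
noncomputable def fD2 (a r : ℝ) : ℂ → ℂ := fun t =>
  (a:ℂ)*((a:ℂ)+1) * ((1 - t)^((a:ℂ)-1) * (1 - (r:ℂ)*t)^(-(a:ℂ)))
  - 2*((a:ℂ)*((a:ℂ)+1)*(r:ℂ)) * ((1 - t)^(a:ℂ) * (1 - (r:ℂ)*t)^(-(a:ℂ)-1))
  + (a:ℂ)*((a:ℂ)+1)*(r:ℂ)^2 * ((1 - t)^((a:ℂ)+1) * (1 - (r:ℂ)*t)^(-(a:ℂ)-2))

lemma hasDerivAt_fF {a r : ℝ} {t : ℂ} (h1 : (1 - t) ∈ Complex.slitPlane)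
    (h2 : (1 - (r:ℂ)*t) ∈ Complex.slitPlane) :
    HasDerivAt (fF a r) (fD1 a r t) t := by
  have H1 := hasDerivAt_lin_cpow 1 ((a:ℂ)+1) t (by simpa using h1)
  have H2 := hasDerivAt_lin_cpow (r:ℂ) (-(a:ℂ)) t h2
  simp only [one_mul] at H1
  have H := H1.mul H2
  refine H.congr_deriv ?_
  rw [show (a:ℂ)+1-1 = (a:ℂ) by ring]
  simp only [fD1]
  ring

lemma hasDerivAt_fD1 {a r : ℝ} {t : ℂ} (h1 : (1 - t) ∈ Complex.slitPlane)
    (h2 : (1 - (r:ℂ)*t) ∈ Complex.slitPlane) :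
    HasDerivAt (fD1 a r) (fD2 a r t) t := by
  have Ha := hasDerivAt_lin_cpow 1 (a:ℂ) t (by simpa using h1)
  have Ha1 := hasDerivAt_lin_cpow 1 ((a:ℂ)+1) t (by simpa using h1)
  have Hb := hasDerivAt_lin_cpow (r:ℂ) (-(a:ℂ)) t h2
  have Hb1 := hasDerivAt_lin_cpow (r:ℂ) (-(a:ℂ)-1) t h2
  simp only [one_mul] at Ha Ha1
  have H := ((Ha.mul Hb).const_mul (-((a:ℂ)+1))).add
    ((Ha1.mul Hb1).const_mul ((a:ℂ)*(r:ℂ)))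
  refine H.congr_deriv ?_
  rw [show (a:ℂ)+1-1 = (a:ℂ) by ring, show -(a:ℂ)-1-1 = -(a:ℂ)-2 by ring]
  simp only [fD2]
  ring


lemma rpow_bound {a b x y d j : ℝ} (ha0 : 0 < a) (hb0 : 0 < b) (hba : b ≤ a) (hj : 0 ≤ j)
    (hx : 0 < x) (hy : 0 < y) (hxy : x ≤ 2*y) (hd : 0 < d) (hdy : d ≤ y) :
    x^(a-1+j) * y^(-(a+j)) ≤ 2^(a+j) * d^(-b) * x^(b-1) := by
  have h1 : y^(-(a+j)) = y^(-(a-b+j)) * y^(-b) := by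
    rw [← Real.rpow_add hy]; ring_nf
  have h2 : y^(-b) ≤ d^(-b) := Real.rpow_le_rpow_of_nonpos hd hdy (by linarith)
  have h3 : y^(-(a-b+j)) ≤ (x/2)^(-(a-b+j)) :=
    Real.rpow_le_rpow_of_nonpos (by positivity) (by linarith) (by linarith)
  have h4 : (x/2)^(-(a-b+j)) = x^(-(a-b+j)) * 2^(a-b+j) := by
    rw [Real.div_rpow hx.le (by norm_num : (0:ℝ) ≤ 2), div_eq_mul_inv,
      ← Real.rpow_neg (by norm_num : (0:ℝ) ≤ 2), neg_neg]
  have h5 : x^(a-1+j) * x^(-(a-b+j)) = x^(b-1) := by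
    rw [← Real.rpow_add hx]; ring_nf
  have h6 : (2:ℝ)^(a-b+j) ≤ 2^(a+j) :=
    Real.rpow_le_rpow_of_exponent_le one_le_two (by linarith)
  calc x^(a-1+j) * y^(-(a+j)) = x^(a-1+j) * y^(-(a-b+j)) * y^(-b) := by rw [h1]; ring
    _ ≤ x^(a-1+j) * (x/2)^(-(a-b+j)) * d^(-b) := by
        apply mul_le_mul _ h2 (by positivity) (by positivity)
        exact mul_le_mul_of_nonneg_left h3 (by positivity)
    _ = x^(b-1) * 2^(a-b+j) * d^(-b) := by rw [h4, ← mul_assoc, h5]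
    _ ≤ 2^(a+j) * d^(-b) * x^(b-1) := by
        have : x^(b-1) * 2^(a-b+j) * d^(-b) ≤ x^(b-1) * 2^(a+j) * d^(-b) := by
          apply mul_le_mul_of_nonneg_right _ (by positivity)
          exact mul_le_mul_of_nonneg_left h6 (by positivity)
        linarith [this]

lemma norm_cpow_real' (z : ℂ) (w : ℝ) : ‖z ^ (w:ℂ)‖ = ‖z‖ ^ w := by
  rw [Complex.norm_cpow_real]

set_option maxHeartbeats 1000000 in
lemma norm_fD2_le {a r b ρ : ℝ} (ha0 : 0 < a) (ha1 : a < 1) (hb0 : 0 < b) (hba : b ≤ a)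
    (hr0 : 0 < r) (hr1 : r < 1) {t : ℂ} (ht : ‖t‖ = ρ) (hρ : ρ < 1) :
    ‖fD2 a r t‖ ≤ 64 * (1-ρ)^(-b) * ‖1 - t‖^(b-1) := by
  have hρ0 : 0 ≤ ρ := ht ▸ norm_nonneg t
  set x := ‖(1:ℂ) - t‖ with hxdef
  set y := ‖(1:ℂ) - (r:ℂ)*t‖ with hydef
  have hx : 1 - ρ ≤ x := by
    have := norm_sub_norm_le (1:ℂ) t
    simpa [ht] using this
  have hx0 : 0 < x := lt_of_lt_of_le (by linarith) hx
  have hrt : ‖(r:ℂ)*t‖ = r * ρ := by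
    simp [norm_mul, ht, abs_of_pos hr0]
  have hy' : 1 - r*ρ ≤ y := by
    have := norm_sub_norm_le (1:ℂ) ((r:ℂ)*t)
    simpa [norm_mul, ht, abs_of_pos hr0] using this
  have hy : 1 - ρ ≤ y := le_trans (by nlinarith) hy'
  have hy0 : 0 < y := lt_of_lt_of_le (by linarith) hy
  have hxy : x ≤ 2*y := by
    have hid : (1:ℂ) - t = (1 - (r:ℂ)*t) - ((1:ℂ)-(r:ℂ)) * t := by ring
    have h2 : ‖((1:ℂ)-(r:ℂ)) * t‖ = (1-r) * ρ := by
      have e : ‖(1:ℂ)-(r:ℂ)‖ = 1 - r := by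
        rw [show (1:ℂ)-(r:ℂ) = ((1-r:ℝ):ℂ) by push_cast; ring]
        rw [Complex.norm_real, Real.norm_eq_abs, abs_of_pos (by linarith : (0:ℝ) < 1-r)]
      rw [norm_mul, e, ht]
    calc x ≤ y + ‖((1:ℂ)-(r:ℂ)) * t‖ := by
          rw [hxdef, hid]; exact norm_sub_le _ _
      _ = y + (1-r)*ρ := by rw [h2]
      _ ≤ 2*y := by nlinarith
  have e1 : ‖(1 - t)^((a:ℂ)-1) * (1 - (r:ℂ)*t)^(-(a:ℂ))‖ = x^(a-1) * y^(-a) := by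
    rw [norm_mul, show (a:ℂ)-1 = ((a-1:ℝ):ℂ) by push_cast; ring,
      show -(a:ℂ) = ((-a:ℝ):ℂ) by push_cast; ring, norm_cpow_real', norm_cpow_real']
  have e2 : ‖(1 - t)^(a:ℂ) * (1 - (r:ℂ)*t)^(-(a:ℂ)-1)‖ = x^a * y^(-(a+1)) := by
    rw [norm_mul, show (a:ℂ) = ((a:ℝ):ℂ) by rfl,
      show -((a:ℝ):ℂ)-1 = ((-(a+1):ℝ):ℂ) by push_cast; ring, norm_cpow_real', norm_cpow_real']
  have e3 : ‖(1 - t)^((a:ℂ)+1) * (1 - (r:ℂ)*t)^(-(a:ℂ)-2)‖ = x^(a+1) * y^(-(a+2)) := by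
    rw [norm_mul, show (a:ℂ)+1 = ((a+1:ℝ):ℂ) by push_cast; ring,
      show -(a:ℂ)-2 = ((-(a+2):ℝ):ℂ) by push_cast; ring, norm_cpow_real', norm_cpow_real']
  have hd0 : (0:ℝ) < 1 - ρ := by linarith
  set M := (1-ρ)^(-b) * x^(b-1) with hMdef
  have hM : 0 ≤ M := by positivity
  have T0 : x^(a-1) * y^(-a) ≤ 8 * M := by
    have h := rpow_bound (j := 0) ha0 hb0 hba le_rfl hx0 hy0 hxy hd0 hy
    have h8 : (2:ℝ)^(a+(0:ℝ)) ≤ 8 := by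
      calc (2:ℝ)^(a+(0:ℝ)) ≤ 2^(3:ℝ) :=
            Real.rpow_le_rpow_of_exponent_le one_le_two (by linarith)
        _ = 8 := by rw [show (3:ℝ) = ((3:ℕ):ℝ) by norm_num, Real.rpow_natCast]; norm_num
    calc x^(a-1) * y^(-a) = x^(a-1+0) * y^(-(a+0)) := by rw [show a-1+0 = a-1 by ring, show -(a+0) = -a by ring]
      _ ≤ 2^(a+(0:ℝ)) * (1-ρ)^(-b) * x^(b-1) := h
      _ = 2^(a+(0:ℝ)) * M := by rw [hMdef]; ring
      _ ≤ 8 * M := mul_le_mul_of_nonneg_right h8 hM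
  have T1 : x^a * y^(-(a+1)) ≤ 8 * M := by
    have h := rpow_bound (j := 1) ha0 hb0 hba zero_le_one hx0 hy0 hxy hd0 hy
    have h8 : (2:ℝ)^(a+(1:ℝ)) ≤ 8 := by
      calc (2:ℝ)^(a+(1:ℝ)) ≤ 2^(3:ℝ) :=
            Real.rpow_le_rpow_of_exponent_le one_le_two (by linarith)
        _ = 8 := by rw [show (3:ℝ) = ((3:ℕ):ℝ) by norm_num, Real.rpow_natCast]; norm_num
    calc x^a * y^(-(a+1)) = x^(a-1+1) * y^(-(a+1)) := by rw [show a-1+1 = a by ring]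
      _ ≤ 2^(a+(1:ℝ)) * (1-ρ)^(-b) * x^(b-1) := h
      _ = 2^(a+(1:ℝ)) * M := by rw [hMdef]; ring
      _ ≤ 8 * M := mul_le_mul_of_nonneg_right h8 hM
  have T2 : x^(a+1) * y^(-(a+2)) ≤ 8 * M := by
    have h := rpow_bound (j := 2) ha0 hb0 hba (by norm_num) hx0 hy0 hxy hd0 hy
    have h8 : (2:ℝ)^(a+(2:ℝ)) ≤ 8 := by
      calc (2:ℝ)^(a+(2:ℝ)) ≤ 2^(3:ℝ) :=
            Real.rpow_le_rpow_of_exponent_le one_le_two (by linarith)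
        _ = 8 := by rw [show (3:ℝ) = ((3:ℕ):ℝ) by norm_num, Real.rpow_natCast]; norm_num
    calc x^(a+1) * y^(-(a+2)) = x^(a-1+2) * y^(-(a+2)) := by rw [show a-1+2 = a+1 by ring]
      _ ≤ 2^(a+(2:ℝ)) * (1-ρ)^(-b) * x^(b-1) := h
      _ = 2^(a+(2:ℝ)) * M := by rw [hMdef]; ring
      _ ≤ 8 * M := mul_le_mul_of_nonneg_right h8 hM
  have n1 : ‖(a:ℂ)*((a:ℂ)+1)‖ = a*(a+1) := by
    rw [show (a:ℂ)*((a:ℂ)+1) = ((a*(a+1):ℝ):ℂ) by push_cast; ring, Complex.norm_real,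
      Real.norm_eq_abs, abs_of_pos (by nlinarith : (0:ℝ) < a*(a+1))]
  have n2 : ‖2*((a:ℂ)*((a:ℂ)+1)*(r:ℂ))‖ = 2*(a*(a+1)*r) := by
    rw [show 2*((a:ℂ)*((a:ℂ)+1)*(r:ℂ)) = ((2*(a*(a+1)*r):ℝ):ℂ) by push_cast; ring,
      Complex.norm_real, Real.norm_eq_abs,
      abs_of_pos (by nlinarith [mul_pos (mul_pos ha0 (show (0:ℝ) < a+1 by linarith)) hr0] : (0:ℝ) < 2*(a*(a+1)*r))]
  have n3 : ‖(a:ℂ)*((a:ℂ)+1)*(r:ℂ)^2‖ = a*(a+1)*r^2 := by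
    rw [show (a:ℂ)*((a:ℂ)+1)*(r:ℂ)^2 = ((a*(a+1)*r^2:ℝ):ℂ) by push_cast; ring,
      Complex.norm_real, Real.norm_eq_abs,
      abs_of_pos (by nlinarith [mul_pos (mul_pos ha0 (show (0:ℝ) < a+1 by linarith)) (pow_pos hr0 2)] : (0:ℝ) < a*(a+1)*r^2)]
  have htri : ‖fD2 a r t‖ ≤
      a*(a+1) * (x^(a-1) * y^(-a)) + 2*(a*(a+1)*r) * (x^a * y^(-(a+1)))
      + a*(a+1)*r^2 * (x^(a+1) * y^(-(a+2))) := by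
    have step : ‖fD2 a r t‖ ≤
        ‖(a:ℂ)*((a:ℂ)+1) * ((1 - t)^((a:ℂ)-1) * (1 - (r:ℂ)*t)^(-(a:ℂ)))‖
        + ‖2*((a:ℂ)*((a:ℂ)+1)*(r:ℂ)) * ((1 - t)^(a:ℂ) * (1 - (r:ℂ)*t)^(-(a:ℂ)-1))‖
        + ‖(a:ℂ)*((a:ℂ)+1)*(r:ℂ)^2 * ((1 - t)^((a:ℂ)+1) * (1 - (r:ℂ)*t)^(-(a:ℂ)-2))‖ := by
      unfold fD2
      refine le_trans (norm_add_le _ _) ?_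
      have := norm_sub_le ((a:ℂ)*((a:ℂ)+1) * ((1 - t)^((a:ℂ)-1) * (1 - (r:ℂ)*t)^(-(a:ℂ))))
        (2*((a:ℂ)*((a:ℂ)+1)*(r:ℂ)) * ((1 - t)^(a:ℂ) * (1 - (r:ℂ)*t)^(-(a:ℂ)-1)))
      linarith
    have m1 : ‖(a:ℂ)*((a:ℂ)+1) * ((1 - t)^((a:ℂ)-1) * (1 - (r:ℂ)*t)^(-(a:ℂ)))‖
        = a*(a+1) * (x^(a-1) * y^(-a)) := by
      rw [norm_mul, n1, e1]
    have m2 : ‖2*((a:ℂ)*((a:ℂ)+1)*(r:ℂ)) * ((1 - t)^(a:ℂ) * (1 - (r:ℂ)*t)^(-(a:ℂ)-1))‖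
        = 2*(a*(a+1)*r) * (x^a * y^(-(a+1))) := by
      rw [norm_mul, n2, e2]
    have m3 : ‖(a:ℂ)*((a:ℂ)+1)*(r:ℂ)^2 * ((1 - t)^((a:ℂ)+1) * (1 - (r:ℂ)*t)^(-(a:ℂ)-2))‖
        = a*(a+1)*r^2 * (x^(a+1) * y^(-(a+2))) := by
      rw [norm_mul, n3, e3]
    rw [m1, m2, m3] at step
    exact step
  have p0 : (0:ℝ) ≤ x^(a-1) * y^(-a) := by positivity
  have p1 : (0:ℝ) ≤ x^a * y^(-(a+1)) := by positivity
  have p2 : (0:ℝ) ≤ x^(a+1) * y^(-(a+2)) := by positivity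
  have B0 : a*(a+1) * (x^(a-1) * y^(-a)) ≤ 2 * (8*M) :=
    mul_le_mul (by nlinarith) T0 p0 (by norm_num)
  have haa : (0:ℝ) ≤ a*(a+1) := by nlinarith
  have B1 : 2*(a*(a+1)*r) * (x^a * y^(-(a+1))) ≤ 4 * (8*M) :=
    mul_le_mul (by nlinarith [mul_le_of_le_one_right haa hr1.le]) T1 p1 (by norm_num)
  have hr2 : r^2 ≤ 1 := by nlinarith
  have hint2 := mul_le_of_le_one_right haa hr2
  have B2 : a*(a+1)*r^2 * (x^(a+1) * y^(-(a+2))) ≤ 2 * (8*M) :=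
    mul_le_mul (by nlinarith [hint2]) T2 p2 (by norm_num)
  calc ‖fD2 a r t‖ ≤ 2*(8*M) + 4*(8*M) + 2*(8*M) := by linarith
    _ = 64 * (1-ρ)^(-b) * x^(b-1) := by rw [hMdef]; ring

open Real in

open Real in
lemma one_sub_circleMap_re (ρ θ : ℝ) :
    ((1:ℂ) - circleMap 0 ρ θ).re = 1 - ρ * Real.cos θ := by
  simp [circleMap, Complex.exp_mul_I, Complex.cos_ofReal_re, Complex.sin_ofReal_re]
open Real in
lemma one_sub_circleMap_im (ρ θ : ℝ) :
    ((1:ℂ) - circleMap 0 ρ θ).im = -(ρ * Real.sin θ) := by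
  simp [circleMap, Complex.exp_mul_I, Complex.cos_ofReal_im, Complex.sin_ofReal_re]

open Real in
lemma circle_lb {ρ θ : ℝ} (hρ : 1/2 ≤ ρ) (hρ1 : ρ ≤ 1) (hθ0 : 0 ≤ θ) (hθ2 : θ ≤ 2*π) :
    min θ (2*π - θ) ≤ π * ‖(1:ℂ) - circleMap 0 ρ θ‖ := by
  have hπ := Real.pi_gt_three
  have hρ0 : (0:ℝ) ≤ ρ := by linarith
  have hn0 : (0:ℝ) ≤ ‖(1:ℂ) - circleMap 0 ρ θ‖ := norm_nonneg _
  have him : |((1:ℂ) - circleMap 0 ρ θ).im| ≤ ‖(1:ℂ) - circleMap 0 ρ θ‖ :=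
    Complex.abs_im_le_norm _
  have hre : |((1:ℂ) - circleMap 0 ρ θ).re| ≤ ‖(1:ℂ) - circleMap 0 ρ θ‖ :=
    Complex.abs_re_le_norm _
  rw [one_sub_circleMap_im, abs_neg] at him
  rw [one_sub_circleMap_re] at hre
  rcases le_or_gt θ (π/2) with h1 | h1
  · have hs := Real.mul_le_sin hθ0 h1
    have hsin0 : 0 ≤ Real.sin θ := Real.sin_nonneg_of_nonneg_of_le_pi hθ0 (by linarith)
    have h2 : ρ * Real.sin θ ≤ ‖(1:ℂ) - circleMap 0 ρ θ‖ := by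
      rwa [_root_.abs_of_nonneg (mul_nonneg hρ0 hsin0)] at him
    have hbase : (0:ℝ) ≤ 2/π*θ := by positivity
    have k1 : (1/2)*(2/π*θ) ≤ ρ*(2/π*θ) := mul_le_mul_of_nonneg_right hρ hbase
    have k2 : ρ*(2/π*θ) ≤ ρ*Real.sin θ := mul_le_mul_of_nonneg_left hs hρ0
    calc min θ (2*π - θ) ≤ θ := min_le_left _ _
      _ = π * ((1/2) * (2/π*θ)) := by field_simp
      _ ≤ π * (ρ * Real.sin θ) :=
          mul_le_mul_of_nonneg_left (k1.trans k2) Real.pi_pos.le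
      _ ≤ π * ‖(1:ℂ) - circleMap 0 ρ θ‖ :=
          mul_le_mul_of_nonneg_left h2 Real.pi_pos.le
  rcases le_or_gt θ (3*π/2) with h2 | h2
  · have hc : Real.cos θ ≤ 0 :=
      Real.cos_nonpos_of_pi_div_two_le_of_le (by linarith) (by linarith)
    have hc' : (0:ℝ) ≤ -(ρ * Real.cos θ) :=
      neg_nonneg.2 (mul_nonpos_of_nonneg_of_nonpos hρ0 hc)
    have h3 : (1:ℝ) ≤ ‖(1:ℂ) - circleMap 0 ρ θ‖ := by
      rw [_root_.abs_of_nonneg (by linarith)] at hre; linarith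
    have hmin : min θ (2*π - θ) ≤ π := by
      rcases le_total θ (2*π - θ) with h | h
      · rw [min_eq_left h]; linarith
      · rw [min_eq_right h]; linarith
    nlinarith [mul_le_mul_of_nonneg_left h3 Real.pi_pos.le]
  · have hφ0 : (0:ℝ) ≤ 2*π - θ := by linarith
    have hφ1 : 2*π - θ ≤ π/2 := by linarith
    have hs := Real.mul_le_sin hφ0 hφ1
    have hsin : Real.sin θ = -Real.sin (2*π - θ) := by
      rw [show θ = 2*π - (2*π - θ) by ring, Real.sin_two_pi_sub]
      ring_nf
    have hsin0 : 0 ≤ Real.sin (2*π - θ) :=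
      Real.sin_nonneg_of_nonneg_of_le_pi hφ0 (by linarith)
    have h3 : ρ * Real.sin (2*π - θ) ≤ ‖(1:ℂ) - circleMap 0 ρ θ‖ := by
      rw [hsin, show ρ * -Real.sin (2*π-θ) = -(ρ * Real.sin (2*π-θ)) by ring, abs_neg,
        _root_.abs_of_nonneg (mul_nonneg hρ0 hsin0)] at him
      exact him
    have hbase : (0:ℝ) ≤ 2/π*(2*π - θ) := by positivity
    have k1 : (1/2)*(2/π*(2*π-θ)) ≤ ρ*(2/π*(2*π-θ)) := mul_le_mul_of_nonneg_right hρ hbase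
    have k2 : ρ*(2/π*(2*π-θ)) ≤ ρ*Real.sin (2*π-θ) := mul_le_mul_of_nonneg_left hs hρ0
    calc min θ (2*π - θ) ≤ 2*π - θ := min_le_right _ _
      _ = π * ((1/2) * (2/π*(2*π-θ))) := by field_simp
      _ ≤ π * (ρ * Real.sin (2*π-θ)) :=
          mul_le_mul_of_nonneg_left (k1.trans k2) Real.pi_pos.le
      _ ≤ π * ‖(1:ℂ) - circleMap 0 ρ θ‖ :=
          mul_le_mul_of_nonneg_left h3 Real.pi_pos.le

lemma coeff_eq_iteratedDeriv {c : ℕ → ℂ} {f : ℂ → ℂ}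
    (hc : ∀ t : ℂ, ‖t‖ < 1 → HasSum (fun n => c n * t ^ n) (f t)) (n : ℕ) :
    (Nat.factorial n : ℂ) * c n = iteratedDeriv n f 0 := by
  have hrad : 1 ≤ (FormalMultilinearSeries.ofScalars ℂ c).radius := by
    apply ENNReal.le_of_forall_nnreal_lt
    intro s hs
    have hs1 : (s:ℝ) < 1 := by exact_mod_cast hs
    have hnorm : ‖((s:ℝ):ℂ)‖ < 1 := by
      rw [Complex.norm_real, Real.norm_eq_abs, _root_.abs_of_nonneg s.coe_nonneg]; exact hs1
    have hsum := (hc ((s:ℝ):ℂ) hnorm).summable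
    apply FormalMultilinearSeries.le_radius_of_tendsto (l := 0)
    have h2 := hsum.tendsto_atTop_zero.norm
    simp only [norm_zero] at h2
    convert h2 using 2 with n
    rw [FormalMultilinearSeries.ofScalars_norm, norm_mul, norm_pow, Complex.norm_real,
      Real.norm_eq_abs, _root_.abs_of_nonneg s.coe_nonneg]
  have hp : HasFPowerSeriesOnBall f (FormalMultilinearSeries.ofScalars ℂ c) 0 1 := by
    refine ⟨hrad, one_pos, ?_⟩
    intro y hy
    rw [mem_emetric_ball_zero_iff] at hy
    have hy' : ‖y‖ < 1 := by
      have := hy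
      rw [show (1:ENNReal) = ((1:NNReal):ENNReal) by norm_num] at this
      exact_mod_cast this
    have h := hc y hy'
    simp only [FormalMultilinearSeries.ofScalars_apply_eq, smul_eq_mul, zero_add]
    exact h
  have h := hp.factorial_smul (1:ℂ) n
  rw [iteratedDeriv_eq_iteratedFDeriv, ← h, FormalMultilinearSeries.ofScalars_apply_eq]
  simp [nsmul_eq_mul]

lemma iteratedDeriv_chain {f f1 f2 : ℂ → ℂ}
    (h1 : ∀ t ∈ Metric.ball (0:ℂ) 1, HasDerivAt f (f1 t) t)
    (h2 : ∀ t ∈ Metric.ball (0:ℂ) 1, HasDerivAt f1 (f2 t) t) (m : ℕ) :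
    iteratedDeriv (m+2) f 0 = iteratedDeriv m f2 0 := by
  have hball : Metric.ball (0:ℂ) 1 ∈ nhds (0:ℂ) := Metric.ball_mem_nhds _ one_pos
  have e1 : deriv f =ᶠ[nhds (0:ℂ)] f1 := by
    filter_upwards [hball] with t ht
    exact (h1 t ht).deriv
  have e2 : deriv f1 =ᶠ[nhds (0:ℂ)] f2 := by
    filter_upwards [hball] with t ht
    exact (h2 t ht).deriv
  calc iteratedDeriv (m+2) f 0 = iteratedDeriv (m+1) (deriv f) 0 := by
        rw [show m+2 = (m+1)+1 by ring, iteratedDeriv_succ']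
    _ = iteratedDeriv (m+1) f1 0 := e1.iteratedDeriv_eq (m+1)
    _ = iteratedDeriv m (deriv f1) 0 := by rw [iteratedDeriv_succ']
    _ = iteratedDeriv m f2 0 := e2.iteratedDeriv_eq m

section
variable {a r : ℝ}

lemma rho_inv_pow_le (m : ℕ) : ((1 - ((m:ℝ)+2)⁻¹)⁻¹)^m ≤ 3 := by
  have hm1 : (0:ℝ) < (m:ℝ)+1 := by positivity
  have hm2 : (0:ℝ) < (m:ℝ)+2 := by positivity
  have hρ : 1 - ((m:ℝ)+2)⁻¹ = ((m:ℝ)+1)/((m:ℝ)+2) := by field_simp; ring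
  rw [hρ, inv_div, show ((m:ℝ)+2)/((m:ℝ)+1) = 1 + ((m:ℝ)+1)⁻¹ by field_simp; ring]
  have h2 : 1 + ((m:ℝ)+1)⁻¹ ≤ Real.exp (((m:ℝ)+1)⁻¹) := by
    have := Real.add_one_le_exp (((m:ℝ)+1)⁻¹); linarith
  calc (1 + ((m:ℝ)+1)⁻¹)^m ≤ (Real.exp (((m:ℝ)+1)⁻¹))^m :=
        pow_le_pow_left₀ (by positivity) h2 m
    _ = Real.exp ((m:ℝ) * ((m:ℝ)+1)⁻¹) := by rw [← Real.exp_nat_mul]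
    _ ≤ Real.exp 1 := by
        apply Real.exp_le_exp.2
        rw [← div_eq_mul_inv]
        exact div_le_one_of_le₀ (by linarith) hm1.le
    _ ≤ 3 := by have := Real.exp_one_lt_d9; linarith

lemma final_arith {a b K2 : ℝ} (ha0 : 0 < a) (ha1 : a < 1) (hb0 : 0 < b) (hb1a : b ≤ 1-a)
    (hK20 : 0 ≤ K2) (m : ℕ) {cn : ℝ} (hcn0 : 0 ≤ cn)
    (H : (Nat.factorial (m+2) : ℝ) * cn ≤ (Nat.factorial m : ℝ) * (K2 * ((m:ℝ)+2)^b)) :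
    cn ≤ (64 + 8*K2) / ((((m:ℕ)+2:ℕ):ℝ)+1)^(1+a) := by
  have hm0 : (0:ℝ) < (Nat.factorial m : ℝ) := by positivity
  have hu0 : (0:ℝ) < (m:ℝ)+1 := by positivity
  have hv0 : (0:ℝ) < (m:ℝ)+2 := by positivity
  have hfact : (Nat.factorial (m+2) : ℝ)
      = (Nat.factorial m : ℝ) * (((m:ℝ)+1) * ((m:ℝ)+2)) := by
    rw [show m+2 = (m+1)+1 by ring, Nat.factorial_succ, Nat.factorial_succ]
    push_cast; ring
  have h1 : cn * (((m:ℝ)+1) * ((m:ℝ)+2)) ≤ K2 * ((m:ℝ)+2)^b := by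
    rw [hfact] at H
    have : (Nat.factorial m : ℝ) * (cn * (((m:ℝ)+1) * ((m:ℝ)+2)))
        ≤ (Nat.factorial m : ℝ) * (K2 * ((m:ℝ)+2)^b) := by nlinarith [H]
    exact le_of_mul_le_mul_left this hm0
  have hcast : ((((m:ℕ)+2:ℕ):ℝ)+1) = (m:ℝ)+2+1 := by push_cast; ring
  rw [hcast]
  have hX0 : (0:ℝ) < ((m:ℝ)+2+1)^(1+a) := Real.rpow_pos_of_pos (by linarith) _
  rw [le_div_iff₀ hX0]
  set X := ((m:ℝ)+2+1)^(1+a) with hXdef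
  have h2 : ((m:ℝ)+2)^b ≤ ((m:ℝ)+2)^(1-a) :=
    Real.rpow_le_rpow_of_exponent_le (by linarith) (by linarith)
  have h3 : X ≤ 4*((m:ℝ)+2)^(1+a) := by
    have s1 : ((m:ℝ)+2+1)^(1+a) ≤ (2*((m:ℝ)+2))^(1+a) :=
      Real.rpow_le_rpow (by linarith) (by linarith) (by linarith)
    have s2 : (2*((m:ℝ)+2))^(1+a) = 2^(1+a) * ((m:ℝ)+2)^(1+a) :=
      Real.mul_rpow (by norm_num) (by linarith)
    have s3 : (2:ℝ)^(1+a) ≤ 4 := by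
      calc (2:ℝ)^(1+a) ≤ 2^(2:ℝ) :=
            Real.rpow_le_rpow_of_exponent_le one_le_two (by linarith)
        _ = 4 := by rw [show (2:ℝ) = ((2:ℕ):ℝ) by norm_num, Real.rpow_natCast]; norm_num
    calc X ≤ (2*((m:ℝ)+2))^(1+a) := s1
      _ = 2^(1+a) * ((m:ℝ)+2)^(1+a) := s2
      _ ≤ 4*((m:ℝ)+2)^(1+a) :=
          mul_le_mul_of_nonneg_right s3 (Real.rpow_nonneg (by linarith) _)
  have h4 : ((m:ℝ)+2)^(1-a) * ((m:ℝ)+2)^(1+a) = ((m:ℝ)+2)^(2:ℕ) := by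
    rw [← Real.rpow_add hv0, show (1-a)+(1+a) = (2:ℝ) by ring,
      ← Real.rpow_natCast ((m:ℝ)+2) 2]
    norm_num
  have hXnn : 0 ≤ X := hX0.le
  have c2 : (cn * (((m:ℝ)+1)*((m:ℝ)+2))) * X ≤ (K2 * ((m:ℝ)+2)^b) * X :=
    mul_le_mul_of_nonneg_right h1 hXnn
  have c3 : (K2 * ((m:ℝ)+2)^b) * X ≤ (K2 * ((m:ℝ)+2)^(1-a)) * X :=
    mul_le_mul_of_nonneg_right (mul_le_mul_of_nonneg_left h2 hK20) hXnn
  have c4 : (K2 * ((m:ℝ)+2)^(1-a)) * X ≤ (K2 * ((m:ℝ)+2)^(1-a)) * (4*((m:ℝ)+2)^(1+a)) :=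
    mul_le_mul_of_nonneg_left h3 (by positivity)
  have c5 : (K2 * ((m:ℝ)+2)^(1-a)) * (4*((m:ℝ)+2)^(1+a))
      = 4*K2*(((m:ℝ)+2)^(2:ℕ)) := by rw [mul_mul_mul_comm, h4]; ring
  have c6 : 4*K2*(((m:ℝ)+2)^(2:ℕ)) ≤ 8*K2*(((m:ℝ)+1)*((m:ℝ)+2)) := by
    have hmn : (0:ℝ) ≤ (m:ℝ) := Nat.cast_nonneg m
    nlinarith [mul_nonneg (mul_nonneg hK20 hmn) hmn, mul_nonneg hK20 hmn]
  have c7 : (cn * X) * (((m:ℝ)+1)*((m:ℝ)+2)) ≤ (8*K2) * (((m:ℝ)+1)*((m:ℝ)+2)) := by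
    nlinarith [c2, c3, c4, c6]
  have c8 : cn * X ≤ 8*K2 := le_of_mul_le_mul_right c7 (by positivity)
  linarith
end
section
variable {a r : ℝ}

lemma diffAt_pair (hr0 : 0 ≤ r) (hr1 : r ≤ 1) {t : ℂ} (ht : ‖t‖ < 1) (w w' : ℂ) :
    DifferentiableAt ℂ (fun z : ℂ => (1 - z)^w * (1 - (r:ℂ)*z)^w') t := by
  have h1 := slit_aux zero_le_one le_rfl ht
  have h2 := slit_aux hr0 hr1 ht
  have d1 : DifferentiableAt ℂ (fun z : ℂ => (1 - z)^w) t := by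
    have := (hasDerivAt_lin_cpow 1 w t (by simpa using h1)).differentiableAt
    simpa using this
  exact d1.mul (hasDerivAt_lin_cpow (r:ℂ) w' t h2).differentiableAt

lemma norm_fF_le (ha0 : 0 < a) (ha1 : a < 1) (hr0 : 0 < r) (hr1 : r < 1) {t : ℂ}
    (ht : ‖t‖ = 1/2) : ‖(1 - t)^((a:ℂ)+1) * (1 - (r:ℂ)*t)^(-(a:ℂ))‖ ≤ 8 := by
  set x := ‖(1:ℂ) - t‖ with hxdef
  set y := ‖(1:ℂ) - (r:ℂ)*t‖ with hydef
  have hx2 : x ≤ 2 := by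
    calc x ≤ ‖(1:ℂ)‖ + ‖t‖ := norm_sub_le _ _
      _ ≤ 2 := by rw [norm_one, ht]; norm_num
  have hx0 : (0:ℝ) ≤ x := norm_nonneg _
  have hy : 1/2 ≤ y := by
    have h1 : ‖(r:ℂ)*t‖ ≤ 1/2 := by
      rw [norm_mul, Complex.norm_real, Real.norm_eq_abs, _root_.abs_of_pos hr0, ht]
      nlinarith
    have := norm_sub_norm_le (1:ℂ) ((r:ℂ)*t)
    rw [norm_one] at this
    linarith
  have e : ‖(1 - t)^((a:ℂ)+1) * (1 - (r:ℂ)*t)^(-(a:ℂ))‖ = x^(a+1) * y^(-a) := by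
    rw [norm_mul, show (a:ℂ)+1 = ((a+1:ℝ):ℂ) by push_cast; ring,
      show -(a:ℂ) = ((-a:ℝ):ℂ) by push_cast; ring, norm_cpow_real', norm_cpow_real']
  rw [e]
  have b1 : x^(a+1) ≤ 4 := by
    calc x^(a+1) ≤ 2^(a+1) := Real.rpow_le_rpow hx0 hx2 (by linarith)
      _ ≤ 2^(2:ℝ) := Real.rpow_le_rpow_of_exponent_le one_le_two (by linarith)
      _ = 4 := by rw [show (2:ℝ) = ((2:ℕ):ℝ) by norm_num, Real.rpow_natCast]; norm_num
  have b2 : y^(-a) ≤ 2 := by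
    have h1 : y^(-a) ≤ ((1:ℝ)/2)^(-a) :=
      Real.rpow_le_rpow_of_nonpos (by norm_num) hy (by linarith)
    have h2 : ((1:ℝ)/2)^(-a) = 2^a := by
      rw [show (1:ℝ)/2 = 2⁻¹ by norm_num, Real.inv_rpow (by norm_num),
        ← Real.rpow_neg (by norm_num), neg_neg]
    have h3 : (2:ℝ)^a ≤ 2^(1:ℝ) :=
      Real.rpow_le_rpow_of_exponent_le one_le_two (by linarith)
    rw [h2] at h1
    rw [Real.rpow_one] at h3
    linarith
  calc x^(a+1) * y^(-a) ≤ 4 * 2 :=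
      mul_le_mul b1 b2 (Real.rpow_nonneg (norm_nonneg _) _) (by norm_num)
    _ = 8 := by norm_num

lemma cont_norm_circle {g : ℂ → ℂ} (hg : ∀ t:ℂ, ‖t‖ < 1 → DifferentiableAt ℂ g t)
    {ρ : ℝ} (hρ0 : 0 ≤ ρ) (hρ : ρ < 1) :
    Continuous fun θ => ‖g (circleMap 0 ρ θ)‖ := by
  apply Continuous.norm
  rw [continuous_iff_continuousAt]
  intro θ
  have hmem : ‖circleMap 0 ρ θ‖ < 1 := by
    rw [norm_circleMap_zero, _root_.abs_of_nonneg hρ0]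
    exact hρ
  exact ((hg _ hmem).continuousAt).comp (continuous_circleMap 0 ρ).continuousAt
end

set_option maxHeartbeats 2000000 in
/-- For `0 < a < 1` and `f_r(t) = (1-t)^{a+1}/(1-rt)^a` (`0 < r < 1`), the Taylor
coefficients of `f_r` satisfy `|f̂_r(n)| ≤ C/(n+1)^{1+a}` with `C` independent of `r`
and `n`. -/
theorem stmt_19 (a : ℝ) (ha : 0 < a) (ha1 : a < 1) :
    ∃ C : ℝ, ∀ r : ℝ, 0 < r → r < 1 →
      ∀ c : ℕ → ℂ,
        (∀ t : ℂ, ‖t‖ < 1 →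
          HasSum (fun n => c n * t ^ n)
            (((1 - t) ^ ((a : ℂ) + 1)) / ((1 - (r : ℂ) * t) ^ (a : ℂ)))) →
        ∀ n : ℕ, ‖c n‖ ≤ C / ((n : ℝ) + 1) ^ (1 + a) := by
  have hπ3 := Real.pi_gt_three
  have hπ0 := Real.pi_pos
  set π := Real.pi with hπdef
  set b := min a (1-a) with hbdef
  have hb0 : 0 < b := lt_min ha (by linarith)
  have hba : b ≤ a := min_le_left _ _
  have hb1a : b ≤ 1 - a := min_le_right _ _
  set D := ∫ θ in (0:ℝ)..(2*π), (θ^(b-1) + (2*π - θ)^(b-1)) with hDdef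
  have hD0 : 0 ≤ D := by
    apply intervalIntegral.integral_nonneg (by positivity)
    intro θ hθ
    have h1 : (0:ℝ) ≤ θ := hθ.1
    have h2 : θ ≤ 2*π := hθ.2
    have := Real.rpow_nonneg h1 (b-1)
    have := Real.rpow_nonneg (by linarith : (0:ℝ) ≤ 2*π - θ) (b-1)
    linarith
  set K2 := (2*π)⁻¹ * (64 * π^(1-b) * D) * 3 with hK2def
  have hK20 : 0 ≤ K2 := by positivity
  refine ⟨64 + 8*K2, ?_⟩
  intro r hr0 hr1 c hc
  -- the function and its derivatives
  have hsum : ∀ t : ℂ, ‖t‖ < 1 → HasSum (fun n => c n * t^n) (fF a r t) := by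
    intro t ht
    have h := hc t ht
    have e : (1 - t) ^ ((a:ℂ)+1) / (1 - (r:ℂ)*t) ^ (a:ℂ) = fF a r t := by
      rw [fF, Complex.cpow_neg, div_eq_mul_inv]
    rwa [e] at h
  have hball : ∀ t : ℂ, t ∈ Metric.ball (0:ℂ) 1 → ‖t‖ < 1 := by
    intro t ht; simpa [Metric.mem_ball, dist_zero_right] using ht
  have hd1 : ∀ t ∈ Metric.ball (0:ℂ) 1, HasDerivAt (fF a r) (fD1 a r t) t := by
    intro t ht
    exact hasDerivAt_fF (by simpa using slit_aux zero_le_one le_rfl (hball t ht))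
      (slit_aux hr0.le hr1.le (hball t ht))
  have hd2 : ∀ t ∈ Metric.ball (0:ℂ) 1, HasDerivAt (fD1 a r) (fD2 a r t) t := by
    intro t ht
    exact hasDerivAt_fD1 (by simpa using slit_aux zero_le_one le_rfl (hball t ht))
      (slit_aux hr0.le hr1.le (hball t ht))
  have hID : ∀ m : ℕ, iteratedDeriv (m+2) (fF a r) 0 = iteratedDeriv m (fD2 a r) 0 :=
    iteratedDeriv_chain hd1 hd2
  have hcoef : ∀ n : ℕ, (Nat.factorial n : ℂ) * c n = iteratedDeriv n (fF a r) 0 :=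
    coeff_eq_iteratedDeriv hsum
  have hdiffF : ∀ t : ℂ, ‖t‖ < 1 → DifferentiableAt ℂ (fF a r) t := by
    intro t ht
    exact diffAt_pair hr0.le hr1.le ht ((a:ℂ)+1) (-(a:ℂ))
  have hdiffF2 : ∀ t : ℂ, ‖t‖ < 1 → DifferentiableAt ℂ (fD2 a r) t := by
    intro t ht
    exact (((diffAt_pair hr0.le hr1.le ht ((a:ℂ)-1) (-(a:ℂ))).const_mul _).sub
      ((diffAt_pair hr0.le hr1.le ht (a:ℂ) (-(a:ℂ)-1)).const_mul _)).add
      ((diffAt_pair hr0.le hr1.le ht ((a:ℂ)+1) (-(a:ℂ)-2)).const_mul _)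
  intro n
  have hXpos : (0:ℝ) < ((n:ℝ)+1)^(1+a) := Real.rpow_pos_of_pos (by positivity) _
  rcases Nat.lt_or_ge n 2 with hn | hn
  · -- small case : n = 0 or 1
    have hRq : ((2⁻¹ : NNReal) : ℝ) = 1/2 := by norm_num
    have hdiff : DifferentiableOn ℂ (fF a r) (Metric.closedBall 0 ((2⁻¹ : NNReal):ℝ)) := by
      intro t ht
      refine (hdiffF t ?_).differentiableWithinAt
      rw [Metric.mem_closedBall, dist_zero_right, hRq] at ht
      linarith
    have hq0 := hdiff.hasFPowerSeriesOnBall (by norm_num : (0:NNReal) < 2⁻¹)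
    set q := cauchyPowerSeries (fF a r) 0 ((2⁻¹ : NNReal):ℝ) with hqdef
    have h3 := hq0.factorial_smul (1:ℂ) n
    have E : (Nat.factorial n : ℂ) * c n = (Nat.factorial n : ℂ) * (q n fun _ => 1) := by
      rw [hcoef n, iteratedDeriv_eq_iteratedFDeriv, ← h3]
      simp [nsmul_eq_mul]
    have E2 : c n = q n fun _ => 1 :=
      mul_left_cancel₀ (by exact_mod_cast Nat.factorial_ne_zero n) E
    have hle1 : ‖q n fun _ => (1:ℂ)‖ ≤ ‖q n‖ := by
      have := (q n).le_opNorm (fun _ => (1:ℂ))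
      simpa using this
    have hle2 : ‖q n‖ ≤ ((2*π)⁻¹ * ∫ θ in (0:ℝ)..2*π,
        ‖fF a r (circleMap 0 (((2⁻¹:NNReal)):ℝ) θ)‖) * |(((2⁻¹:NNReal)):ℝ)|⁻¹^n :=
      norm_cauchyPowerSeries_le _ _ _ n
    have hIb : (∫ θ in (0:ℝ)..2*π, ‖fF a r (circleMap 0 (((2⁻¹:NNReal)):ℝ) θ)‖)
        ≤ 8 * (2*π) := by
      have hcont : Continuous fun θ => ‖fF a r (circleMap 0 (((2⁻¹:NNReal)):ℝ) θ)‖ :=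
        cont_norm_circle hdiffF (by rw [hRq]; norm_num) (by rw [hRq]; norm_num)
      calc (∫ θ in (0:ℝ)..2*π, ‖fF a r (circleMap 0 (((2⁻¹:NNReal)):ℝ) θ)‖)
          ≤ ∫ _ in (0:ℝ)..2*π, (8:ℝ) := by
            apply intervalIntegral.integral_mono_on (by positivity)
              (hcont.intervalIntegrable _ _) intervalIntegrable_const
            intro θ hθ
            have hnorm : ‖circleMap 0 (((2⁻¹:NNReal)):ℝ) θ‖ = 1/2 := by
              rw [norm_circleMap_zero, hRq]; norm_num
            exact norm_fF_le ha ha1 hr0 hr1 hnorm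
        _ = 8 * (2*π) := by rw [intervalIntegral.integral_const, smul_eq_mul]; ring
    have habs : |(((2⁻¹:NNReal)):ℝ)|⁻¹ = 2 := by
      rw [hRq, _root_.abs_of_pos (by norm_num : (0:ℝ) < 1/2)]; norm_num
    have hcn : ‖c n‖ ≤ 8 * 2^n := by
      rw [E2]
      calc ‖q n fun _ => (1:ℂ)‖ ≤ ‖q n‖ := hle1
        _ ≤ ((2*π)⁻¹ * ∫ θ in (0:ℝ)..2*π,
              ‖fF a r (circleMap 0 (((2⁻¹:NNReal)):ℝ) θ)‖) * |(((2⁻¹:NNReal)):ℝ)|⁻¹^n := hle2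
        _ ≤ ((2*π)⁻¹ * (8*(2*π))) * 2^n := by
            rw [habs]
            apply mul_le_mul_of_nonneg_right _ (by positivity)
            exact mul_le_mul_of_nonneg_left hIb (by positivity)
        _ = 8 * 2^n := by field_simp
    have hcn16 : ‖c n‖ ≤ 16 := by
      have : (2:ℝ)^n ≤ 2 := by
        interval_cases n <;> norm_num
      nlinarith [hcn]
    rw [le_div_iff₀ hXpos]
    have hX4 : ((n:ℝ)+1)^(1+a) ≤ 4 := by
      have h1 : ((n:ℝ)+1) ≤ 2 := by
        have : (n:ℝ) ≤ 1 := by exact_mod_cast Nat.lt_succ_iff.mp hn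
        linarith
      calc ((n:ℝ)+1)^(1+a) ≤ 2^(1+a) :=
            Real.rpow_le_rpow (by positivity) h1 (by linarith)
        _ ≤ 2^(2:ℝ) := Real.rpow_le_rpow_of_exponent_le one_le_two (by linarith)
        _ = 4 := by rw [show (2:ℝ) = ((2:ℕ):ℝ) by norm_num, Real.rpow_natCast]; norm_num
    nlinarith [mul_le_mul hcn16 hX4 hXpos.le (by norm_num : (0:ℝ) ≤ 16)]
  · -- large case : n = m + 2
    obtain ⟨m, rfl⟩ : ∃ m, n = m + 2 := ⟨n - 2, by omega⟩
    set ρ : ℝ := 1 - ((m:ℝ)+2)⁻¹ with hρdef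
    have hm2 : (0:ℝ) < (m:ℝ)+2 := by positivity
    have hinv2 : ((m:ℝ)+2)⁻¹ ≤ 1/2 := by
      have h2 : (2:ℝ) ≤ (m:ℝ)+2 := by
        have : (0:ℝ) ≤ (m:ℝ) := Nat.cast_nonneg m
        linarith
      calc ((m:ℝ)+2)⁻¹ ≤ (2:ℝ)⁻¹ := inv_anti₀ two_pos h2
        _ = 1/2 := by norm_num
    have hinv0 : (0:ℝ) < ((m:ℝ)+2)⁻¹ := by positivity
    have hρhalf : 1/2 ≤ ρ := by rw [hρdef]; linarith
    have hρ1 : ρ < 1 := by rw [hρdef]; linarith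
    have hρ0 : (0:ℝ) < ρ := lt_of_lt_of_le (by norm_num) hρhalf
    set ρn : NNReal := Real.toNNReal ρ with hρndef
    have hρn : (ρn:ℝ) = ρ := Real.coe_toNNReal _ hρ0.le
    have hρnpos : 0 < ρn := Real.toNNReal_pos.2 hρ0
    have hdiff2 : DifferentiableOn ℂ (fD2 a r) (Metric.closedBall 0 (ρn:ℝ)) := by
      intro t ht
      refine (hdiffF2 t ?_).differentiableWithinAt
      rw [Metric.mem_closedBall, dist_zero_right, hρn] at ht
      linarith
    have hq := hdiff2.hasFPowerSeriesOnBall hρnpos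
    set q := cauchyPowerSeries (fD2 a r) 0 (ρn:ℝ) with hqdef
    have h3 := hq.factorial_smul (1:ℂ) m
    have E : ((Nat.factorial (m+2) : ℂ)) * c (m+2)
        = (Nat.factorial m : ℂ) * (q m fun _ => 1) := by
      rw [hcoef (m+2), hID m, iteratedDeriv_eq_iteratedFDeriv, ← h3]
      simp [nsmul_eq_mul]
    have En : ((Nat.factorial (m+2) : ℝ)) * ‖c (m+2)‖
        = (Nat.factorial m : ℝ) * ‖q m fun _ => 1‖ := by
      have h := congrArg norm E
      rwa [norm_mul, norm_mul, Complex.norm_natCast, Complex.norm_natCast] at h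
    have hle1 : ‖q m fun _ => (1:ℂ)‖ ≤ ‖q m‖ := by
      simpa using (q m).le_opNorm (fun _ => (1:ℂ))
    have hle2 := norm_cauchyPowerSeries_le (fD2 a r) 0 ((ρn:ℝ)) m
    set I := ∫ θ in (0:ℝ)..2*π, ‖fD2 a r (circleMap 0 ((ρn:ℝ)) θ)‖ with hIdef
    have h1ρ0 : (0:ℝ) < 1 - ρ := by linarith
    have hNb : (0:ℝ) ≤ (1-ρ)^(-b) := Real.rpow_nonneg h1ρ0.le _
    have hπb : (0:ℝ) ≤ π^(1-b) := Real.rpow_nonneg hπ0.le _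
    have hIle : I ≤ (64 * (1-ρ)^(-b) * π^(1-b)) * D := by
      have hcont : Continuous fun θ => ‖fD2 a r (circleMap 0 ((ρn:ℝ)) θ)‖ :=
        cont_norm_circle hdiffF2 (by rw [hρn]; exact hρ0.le) (by rw [hρn]; exact hρ1)
      have hrint : IntervalIntegrable (fun θ:ℝ => θ^(b-1))
          MeasureTheory.volume 0 (2*π) :=
        intervalIntegral.intervalIntegrable_rpow' (by linarith)
      have hrint2 : IntervalIntegrable (fun θ:ℝ => (2*π-θ)^(b-1))
          MeasureTheory.volume 0 (2*π) := by
        have h := (intervalIntegral.intervalIntegrable_rpow'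
          (by linarith : (-1:ℝ) < b-1) (a := 0) (b := 2*π)).comp_sub_left (2*π)
        have h2 := h.symm
        simpa using h2
      have hgint : IntervalIntegrable
          (fun θ => (64*(1-ρ)^(-b)*π^(1-b)) * (θ^(b-1) + (2*π-θ)^(b-1)))
          MeasureTheory.volume 0 (2*π) := (hrint.add hrint2).const_mul _
      have hae : ∀ᵐ θ ∂(MeasureTheory.volume.restrict (Set.Icc (0:ℝ) (2*π))),
          ‖fD2 a r (circleMap 0 ((ρn:ℝ)) θ)‖
            ≤ (64*(1-ρ)^(-b)*π^(1-b)) * (θ^(b-1) + (2*π-θ)^(b-1)) := by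
        have hz : MeasureTheory.volume ({0, 2*π} : Set ℝ) = 0 :=
          ((Set.finite_singleton (2*π)).insert 0).measure_zero _
        have h0 : ∀ᵐ θ:ℝ ∂MeasureTheory.volume, θ ∉ ({0, 2*π} : Set ℝ) :=
          MeasureTheory.measure_eq_zero_iff_ae_notMem.1 hz
        filter_upwards [MeasureTheory.ae_restrict_mem measurableSet_Icc,
          MeasureTheory.ae_restrict_of_ae h0] with θ hθ hθne
        simp only [Set.mem_insert_iff, Set.mem_singleton_iff, not_or] at hθne
        have hθ0 : 0 < θ := hθ.1.lt_of_ne (Ne.symm hθne.1)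
        have hθ2 : θ < 2*π := lt_of_le_of_ne hθ.2 hθne.2
        have hnorm : ‖circleMap 0 ((ρn:ℝ)) θ‖ = ρ := by
          rw [norm_circleMap_zero, hρn, _root_.abs_of_pos hρ0]
        have s1 := norm_fD2_le ha ha1 hb0 hba hr0 hr1 hnorm hρ1
        have hminpos : 0 < min θ (2*π - θ) := lt_min hθ0 (by linarith)
        have s2 : min θ (2*π-θ)/π ≤ ‖(1:ℂ) - circleMap 0 ((ρn:ℝ)) θ‖ := by
          have hlb := circle_lb (ρ := ((ρn:ℝ))) (θ := θ)
            (by rw [hρn]; exact hρhalf) (by rw [hρn]; exact hρ1.le) hθ.1 hθ.2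
          rw [div_le_iff₀ hπ0]
          linarith
        have s3 : ‖(1:ℂ) - circleMap 0 ((ρn:ℝ)) θ‖^(b-1) ≤ (min θ (2*π-θ)/π)^(b-1) :=
          Real.rpow_le_rpow_of_nonpos (by positivity) s2 (by linarith)
        have s4 : (min θ (2*π-θ)/π)^(b-1) = (min θ (2*π-θ))^(b-1) * π^(1-b) := by
          rw [Real.div_rpow hminpos.le hπ0.le, div_eq_mul_inv,
            ← Real.rpow_neg hπ0.le, show -(b-1) = 1-b by ring]
        have s5 : (min θ (2*π-θ))^(b-1) ≤ θ^(b-1) + (2*π-θ)^(b-1) := by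
          rcases min_cases θ (2*π-θ) with ⟨h,_⟩|⟨h,_⟩ <;> rw [h]
          · exact le_add_of_nonneg_right (Real.rpow_nonneg (by linarith) _)
          · exact le_add_of_nonneg_left (Real.rpow_nonneg (by linarith) _)
        calc ‖fD2 a r (circleMap 0 ((ρn:ℝ)) θ)‖
            ≤ 64*(1-ρ)^(-b) * ‖(1:ℂ) - circleMap 0 ((ρn:ℝ)) θ‖^(b-1) := s1
          _ ≤ 64*(1-ρ)^(-b) * ((min θ (2*π-θ))^(b-1) * π^(1-b)) := by
              refine mul_le_mul_of_nonneg_left ?_ (by positivity)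
              rw [← s4]
              exact s3
          _ = (64*(1-ρ)^(-b)*π^(1-b)) * (min θ (2*π-θ))^(b-1) := by ring
          _ ≤ (64*(1-ρ)^(-b)*π^(1-b)) * (θ^(b-1) + (2*π-θ)^(b-1)) := by
              refine mul_le_mul_of_nonneg_left s5 ?_
              have : (0:ℝ) ≤ 64*(1-ρ)^(-b) := by linarith [hNb]
              exact mul_nonneg this hπb
      calc I ≤ ∫ θ in (0:ℝ)..2*π,
              (64*(1-ρ)^(-b)*π^(1-b)) * (θ^(b-1) + (2*π-θ)^(b-1)) :=
            intervalIntegral.integral_mono_ae_restrict (by positivity)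
              (hcont.intervalIntegrable _ _) hgint hae
        _ = (64 * (1-ρ)^(-b) * π^(1-b)) * D := by
            rw [intervalIntegral.integral_const_mul]
    have hI2 : (1-ρ)^(-b) = ((m:ℝ)+2)^b := by
      rw [show 1-ρ = ((m:ℝ)+2)⁻¹ by rw [hρdef]; ring,
        Real.inv_rpow hm2.le, ← Real.rpow_neg hm2.le, neg_neg]
    have hρinv : |(ρn:ℝ)|⁻¹^m ≤ 3 := by
      rw [hρn, _root_.abs_of_pos hρ0, hρdef]
      exact rho_inv_pow_le m
    have hI0 : 0 ≤ I := by
      apply intervalIntegral.integral_nonneg (by positivity)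
      intro θ _
      exact norm_nonneg _
    have Hchain : ((Nat.factorial (m+2) : ℝ)) * ‖c (m+2)‖
        ≤ (Nat.factorial m : ℝ) * (K2 * ((m:ℝ)+2)^b) := by
      rw [En]
      apply mul_le_mul_of_nonneg_left _ (by positivity)
      rw [hI2] at hIle
      have hmb : (0:ℝ) ≤ ((m:ℝ)+2)^b := Real.rpow_nonneg hm2.le _
      calc ‖q m fun _ => (1:ℂ)‖ ≤ ‖q m‖ := hle1
        _ ≤ ((2*π)⁻¹ * I) * |(ρn:ℝ)|⁻¹^m := hle2
        _ ≤ ((2*π)⁻¹ * ((64*((m:ℝ)+2)^b*π^(1-b)) * D)) * 3 := by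
            apply mul_le_mul ?_ hρinv (by positivity) ?_
            · apply mul_le_mul_of_nonneg_left _ (by positivity)
              calc I ≤ (64 * ((m:ℝ)+2)^b * π^(1-b)) * D := hIle
                _ = (64*((m:ℝ)+2)^b*π^(1-b)) * D := by ring
            · have : (0:ℝ) ≤ (64*((m:ℝ)+2)^b*π^(1-b)) * D :=
                mul_nonneg (by positivity) hD0
              positivity
        _ = K2 * ((m:ℝ)+2)^b := by rw [hK2def]; ring
    exact final_arith ha ha1 hb0 hb1a hK20 m (norm_nonneg _) Hchain
end
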